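/- Let A : I → Matrix (Fin n) (Fin n) ℂ be continuous on an open interval I and let Y : I → Matrix (Fin n) (Fin n) ℂ be differentiable with Y'(t) = A(t) Y(t) on I. If Y(t₀) is invertible for some t₀ ∈ I, then Y(t) is invertible for all t ∈ I. -/

import Mathlib

open Matrix Set

/-- Leibniz formula for the determinant, in terms of rows. -/
private lemma det_eq_sum_perm {n : ℕ} (M : Matrix (Fin n) (Fin n) ℂ) :
    M.det = ∑ σ : Equiv.Perm (Fin n),
      ((Equiv.Perm.sign σ : ℤ) : ℂ) * ∏ i, M i (σ i) := by
  rw [← Matrix.det_transpose, Matrix.det_apply']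
  simp [Matrix.transpose_apply]

/-- Derivative of the determinant along a curve of matrices. -/
private lemma hasDerivAt_det_aux {n : ℕ} (Y : ℝ → Matrix (Fin n) (Fin n) ℂ)
    (B : Matrix (Fin n) (Fin n) ℂ) (t : ℝ)
    (h : ∀ i j, HasDerivAt (fun s => Y s i j) (B i j) t) :
    HasDerivAt (fun s => (Y s).det)
      (∑ i, (Matrix.updateRow (Y t) i (B i)).det) t := by
  have h1 : HasDerivAt (fun s => ∑ σ : Equiv.Perm (Fin n),
      ((Equiv.Perm.sign σ : ℤ) : ℂ) * ∏ i, Y s i (σ i))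
      (∑ σ : Equiv.Perm (Fin n), ((Equiv.Perm.sign σ : ℤ) : ℂ) *
        ∑ i, (∏ j ∈ Finset.univ.erase i, Y t j (σ j)) • B i (σ i)) t := by
    apply HasDerivAt.fun_sum
    intro σ _
    exact HasDerivAt.const_mul _ (HasDerivAt.fun_finsetProd (fun i _ => h i (σ i)))
  have hfun : (fun s => (Y s).det) = (fun s => ∑ σ : Equiv.Perm (Fin n),
      ((Equiv.Perm.sign σ : ℤ) : ℂ) * ∏ i, Y s i (σ i)) := by
    funext s; exact det_eq_sum_perm (Y s)
  have hval : (∑ σ : Equiv.Perm (Fin n), ((Equiv.Perm.sign σ : ℤ) : ℂ) *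
        ∑ i, (∏ j ∈ Finset.univ.erase i, Y t j (σ j)) • B i (σ i))
      = ∑ i, (Matrix.updateRow (Y t) i (B i)).det := by
    simp_rw [Finset.mul_sum]
    rw [Finset.sum_comm]
    refine Finset.sum_congr rfl fun i _ => ?_
    rw [det_eq_sum_perm]
    refine Finset.sum_congr rfl fun σ _ => ?_
    have hprod : (∏ j, (Matrix.updateRow (Y t) i (B i)) j (σ j))
        = B i (σ i) * ∏ j ∈ Finset.univ.erase i, Y t j (σ j) := by
      rw [← Finset.mul_prod_erase Finset.univ _ (Finset.mem_univ i)]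
      congr 1
      · simp
      · refine Finset.prod_congr rfl fun j hj => ?_
        rw [Matrix.updateRow_ne (Finset.ne_of_mem_erase hj)]
    rw [hprod]
    simp only [smul_eq_mul]
    ring
  rw [hfun, ← hval]
  exact h1

/-- `(det Y)' = tr A * det Y` when `Y' = A Y`. -/
private lemma hasDerivAt_det {n : ℕ} (A Y : ℝ → Matrix (Fin n) (Fin n) ℂ) (t : ℝ)
    (h : ∀ i j, HasDerivAt (fun s => Y s i j) ((A t * Y t) i j) t) :
    HasDerivAt (fun s => (Y s).det) ((A t).trace * (Y t).det) t := by
  have key := hasDerivAt_det_aux Y (A t * Y t) t h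
  have hrow : ∀ i, (A t * Y t) i = ∑ k, (A t i k) • (Y t) k := by
    intro i
    funext j
    simp [Matrix.mul_apply, Finset.sum_apply]
  have hval : (∑ i, (Matrix.updateRow (Y t) i ((A t * Y t) i)).det)
      = (A t).trace * (Y t).det := by
    have : ∀ i, (Matrix.updateRow (Y t) i ((A t * Y t) i)).det
        = (A t i i) * (Y t).det := by
      intro i
      rw [hrow i, Matrix.det_updateRow_sum]
      simp
    simp_rw [this]
    rw [← Finset.sum_mul, Matrix.trace]
    rfl
  rw [← hval]
  exact key

/-- A matrix solution of `Y' = AY` that is invertible at one point of an open interval is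
invertible everywhere on that interval. -/
theorem stmt_11 {n : ℕ} (a b : ℝ)
    (A Y : ℝ → Matrix (Fin n) (Fin n) ℂ)
    (hA : ∀ i j, ContinuousOn (fun t => A t i j) (Set.Ioo a b))
    (hY : ∀ t ∈ Set.Ioo a b, ∀ i j,
      HasDerivAt (fun s => Y s i j) ((A t * Y t) i j) t)
    (t₀ : ℝ) (ht₀ : t₀ ∈ Set.Ioo a b) (hY₀ : IsUnit (Y t₀)) :
    ∀ t ∈ Set.Ioo a b, IsUnit (Y t) := by
  intro t ht
  have hI : IsOpen (Set.Ioo a b) := isOpen_Ioo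
  -- continuity of the trace
  have htr : ContinuousOn (fun s => (A s).trace) (Set.Ioo a b) := by
    have : (fun s => (A s).trace) = fun s => ∑ i, A s i i := by
      funext s; rfl
    rw [this]
    exact continuousOn_finset_sum _ fun i _ => hA i i
  -- antiderivative of the trace
  set F : ℝ → ℂ := fun s => ∫ u in t₀..s, (A u).trace with hFdef
  have hF : ∀ s ∈ Set.Ioo a b, HasDerivAt F ((A s).trace) s := by
    intro s hs
    apply intervalIntegral.integral_hasDerivAt_right
    · exact (htr.mono (Set.ordConnected_Ioo.uIcc_subset ht₀ hs)).intervalIntegrable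
    · exact htr.stronglyMeasurableAtFilter hI s hs
    · exact (htr s hs).continuousAt (hI.mem_nhds hs)
  -- the integrating factor makes exp(-F) * det Y constant
  set g : ℝ → ℂ := fun s => Complex.exp (-F s) * (Y s).det with hgdef
  have hg : ∀ s ∈ Set.Ioo a b, HasDerivAt g 0 s := by
    intro s hs
    have h1 : HasDerivAt (fun u => Complex.exp (-F u))
        (Complex.exp (-F s) * (-(A s).trace)) s := ((hF s hs).neg).cexp
    have h2 : HasDerivAt (fun u => (Y u).det) ((A s).trace * (Y s).det) s :=
      hasDerivAt_det A Y s (hY s hs)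
    have h3 := h1.mul h2
    have : Complex.exp (-F s) * -(A s).trace * (Y s).det +
        Complex.exp (-F s) * ((A s).trace * (Y s).det) = 0 := by ring
    rw [this] at h3
    exact h3
  have hconst : g t = g t₀ := by
    apply (convex_Ioo a b).is_const_of_fderivWithin_eq_zero (𝕜 := ℝ)
      (f := g) (s := Set.Ioo a b)
    · intro x hx
      exact ((hg x hx).differentiableAt).differentiableWithinAt
    · intro x hx
      rw [fderivWithin_of_isOpen hI hx, (hg x hx).hasFDerivAt.fderiv]
      ext
      simp
    · exact ht
    · exact ht₀
  -- conclude
  have hdet₀ : (Y t₀).det ≠ 0 := by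
    have := (Matrix.isUnit_iff_isUnit_det _).mp hY₀
    exact isUnit_iff_ne_zero.mp this
  have hgt₀ : g t₀ ≠ 0 := mul_ne_zero (Complex.exp_ne_zero _) hdet₀
  have hgt : g t ≠ 0 := hconst ▸ hgt₀
  have hdet : (Y t).det ≠ 0 := by
    intro h0
    apply hgt
    rw [hgdef]
    simp [h0]
  exact (Matrix.isUnit_iff_isUnit_det _).mpr (isUnit_iff_ne_zero.mpr hdet)
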